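/- Suppose the single-via path P_{svt} via v has been verified to be T-locally optimal with T = α·l(P_{svt}), where the verification considered the subsection P_{xvy} of P_{svt} around v with d(x,v) ≥ α·l(P_{svt}) and d(v,y) ≥ α·l(P_{svt}). Then every single-via path P_{s~vt~} via v that contains P_{xvy} as a subpath and satisfies l(P_{s~vt~}) ≤ (1/γ)·l(P_{svt}), for γ ∈ (0,1], is (α·γ)-relative locally optimal. -/

import Mathlib

open List

variable {V : Type*}

/-- Length (cost) of a path given as a list of vertices, with edge weights `c`. -/
def pLen (c : V → V → ℝ) : List V → ℝ
  | [] => 0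
  | [_] => 0
  | a :: b :: rest => c a b + pLen c (b :: rest)

/-- The pInterior of a path: the path with its two endpoints removed. -/
def pInterior (p : List V) : List V := (p.drop 1).dropLast

/-- A (nonempty) path is a shortest path if its length equals the shortest-path
distance `d` between its endpoints. -/
def IsShortestPath [Inhabited V] (c d : V → V → ℝ) (p : List V) : Prop :=
  p ≠ [] ∧ pLen c p = d p.headI p.getLastI

/-- A path is `T`-locally optimal if every `T`-significant subpath (a nonempty
infix whose pInterior has length `< T`) is a shortest path. -/
def TLocOpt [Inhabited V] (c d : V → V → ℝ) (T : ℝ) (p : List V) : Prop :=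
  ∀ q : List V, q ≠ [] → q <:+: p → pLen c (pInterior q) < T → IsShortestPath c d q

/-! ### Auxiliary list lemmas -/

lemma headI_append' [Inhabited V] (l m : List V) (h : l ≠ []) : (l ++ m).headI = l.headI := by
  cases l with
  | nil => exact absurd rfl h
  | cons a t => simp

lemma getLastI_concat' [Inhabited V] (l : List V) (a : V) : (l ++ [a]).getLastI = a := by
  rw [List.getLastI_eq_getLast?, List.getLast?_append] <;> simp

lemma getLastI_append' [Inhabited V] (l m : List V) (h : m ≠ []) :
    (l ++ m).getLastI = m.getLastI := by
  obtain ⟨m', a, rfl⟩ := (List.eq_nil_or_concat m).resolve_left h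
  simp only [List.concat_eq_append]
  rw [← List.append_assoc, getLastI_concat', getLastI_concat']

lemma cons_headI_tail' [Inhabited V] (l : List V) (h : l ≠ []) : l.headI :: l.tail = l :=
  List.cons_head!_tail h

lemma concat_getLastI [Inhabited V] (l : List V) (h : l ≠ []) :
    l.dropLast ++ [l.getLastI] = l := by
  obtain ⟨m', a, rfl⟩ := (List.eq_nil_or_concat l).resolve_left h
  simp only [List.concat_eq_append]
  rw [getLastI_concat', List.dropLast_concat]

/-! ### pLen lemmas -/

section
variable {c d : V → V → ℝ}

lemma pLen_nonneg (hc : ∀ a b, 0 ≤ c a b) : ∀ p : List V, 0 ≤ pLen c p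
  | [] => le_rfl
  | [_] => le_rfl
  | a :: b :: rest => by
      have := pLen_nonneg hc (b :: rest)
      simpa [pLen] using add_nonneg (hc a b) this

lemma pLen_cons [Inhabited V] (a : V) (l : List V) (h : l ≠ []) :
    pLen c (a :: l) = c a l.headI + pLen c l := by
  cases l with
  | nil => exact absurd rfl h
  | cons b t => rfl

lemma pLen_join [Inhabited V] (A : List V) (w : V) (B : List V) :
    pLen c (A ++ w :: B) = pLen c (A ++ [w]) + pLen c (w :: B) := by
  induction A with
  | nil => simp [pLen]
  | cons a A' ih =>
    have h1 : (A' ++ w :: B) ≠ [] := by simp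
    have h2 : (A' ++ [w]) ≠ [] := by simp
    have hh : (A' ++ w :: B).headI = (A' ++ [w]).headI := by cases A' <;> simp
    rw [List.cons_append, pLen_cons _ _ h1, List.cons_append, pLen_cons _ _ h2, hh, ih]
    ring

lemma pLen_split_head [Inhabited V] (l₁ q : List V) (h : q ≠ []) :
    pLen c (l₁ ++ q) = pLen c (l₁ ++ [q.headI]) + pLen c q := by
  cases q with
  | nil => exact absurd rfl h
  | cons a t => exact pLen_join l₁ a t

lemma pLen_split_last [Inhabited V] (q l₂ : List V) (h : q ≠ []) :
    pLen c (q ++ l₂) = pLen c q + pLen c (q.getLastI :: l₂) := by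
  conv_lhs => rw [← concat_getLastI q h]
  rw [List.append_assoc, List.singleton_append, pLen_join, concat_getLastI q h]

lemma pLen_prefix_le [Inhabited V] (hc : ∀ a b, 0 ≤ c a b) (l r : List V) :
    pLen c l ≤ pLen c (l ++ r) := by
  by_cases h : l = []
  · subst h; simpa [pLen] using pLen_nonneg hc r
  · rw [pLen_split_last l r h]
    have := pLen_nonneg hc (l.getLastI :: r)
    linarith

/-- An infix of a shortest path is a shortest path. -/
lemma shortest_infix [Inhabited V]
    (hc : ∀ a b, 0 ≤ c a b)
    (hlow : ∀ p : List V, p ≠ [] → d p.headI p.getLastI ≤ pLen c p)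
    (htri : ∀ a b e : V, d a e ≤ d a b + d b e)
    {p q : List V} (hq : q ≠ []) (hqp : q <:+: p) (hp : IsShortestPath c d p) :
    IsShortestPath c d q := by
  obtain ⟨u, w, rfl⟩ := hqp
  refine ⟨hq, le_antisymm ?_ (hlow q hq)⟩
  have hsplit : pLen c (u ++ q ++ w) = pLen c (u ++ [q.headI]) + pLen c q
      + pLen c (q.getLastI :: w) := by
    rw [pLen_split_last (u ++ q) w (by simp [hq]), getLastI_append' u q hq,
      pLen_split_head u q hq]
  have hpre := hlow (u ++ [q.headI]) (by simp)
  rw [getLastI_concat'] at hpre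
  have hpreh : (u ++ [q.headI]).headI = (u ++ q ++ w).headI := by
    cases u with
    | nil => simp [headI_append' q w hq]
    | cons a t => simp
  rw [hpreh] at hpre
  have hsuf := hlow (q.getLastI :: w) (by simp)
  have hsufl : (q.getLastI :: w).getLastI = (u ++ q ++ w).getLastI := by
    cases w with
    | nil =>
      simp only [List.append_nil, getLastI_append' u q hq]
      rfl
    | cons b w' =>
      rw [getLastI_append' (u ++ q) (b :: w') (by simp)]
      exact getLastI_append' [q.getLastI] (b :: w') (by simp)
  rw [hsufl] at hsuf
  simp only [List.headI_cons] at hsuf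
  have h2 := hp.2
  have t1 := htri (u ++ q ++ w).headI q.headI (u ++ q ++ w).getLastI
  have t2 := htri q.headI q.getLastI (u ++ q ++ w).getLastI
  linarith

/-! ### Prefix-length function -/

/-- Length of the path along `R` from position `0` to position `j`. -/
noncomputable def pPre (c : V → V → ℝ) (R : List V) (j : ℕ) : ℝ := pLen c (R.take (j + 1))

lemma pPre_mono [Inhabited V] (hc : ∀ a b, 0 ≤ c a b) (R : List V) {j k : ℕ} (h : j ≤ k) :
    pPre c R j ≤ pPre c R k := by
  have : R.take (k + 1) = R.take (j + 1) ++ (R.drop (j + 1)).take (k - j) := by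
    rw [← List.take_add]; congr 1; omega
  rw [pPre, pPre, this]
  exact pLen_prefix_le hc _ _

lemma pPre_eq [Inhabited V] (l₁ q l₂ R : List V) (hq : q ≠ []) (hR : R = l₁ ++ q ++ l₂) :
    pPre c R (l₁.length + (q.length - 1)) = pPre c R l₁.length + pLen c q := by
  have hq1 : 1 ≤ q.length := List.length_pos_iff.mpr hq
  have h1 : R.take (l₁.length + (q.length - 1) + 1) = l₁ ++ q := by
    have he : l₁.length + (q.length - 1) + 1 = (l₁ ++ q).length := by
      rw [List.length_append]; omega
    rw [hR, he, List.take_left]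
  have h2 : R.take (l₁.length + 1) = l₁ ++ [q.headI] := by
    rw [hR, List.append_assoc, List.take_append,
      List.take_of_length_le (by omega : l₁.length ≤ l₁.length + 1)]
    have e : l₁.length + 1 - l₁.length = 1 := by omega
    rw [e]
    cases q with
    | nil => exact absurd rfl hq
    | cons a t => simp
  rw [pPre, pPre, h1, h2, pLen_split_head l₁ q hq]

/-- Given two pointed decompositions of `R` with the first point at an earlier
position, extract the segment between the two points. -/
lemma seg_exists (R u₁ u₂ u₃ u₄ : List V) [Inhabited V] (w z : V)
    (h1 : R = u₁ ++ w :: u₂) (h2 : R = u₃ ++ z :: u₄) (hle : u₁.length ≤ u₃.length) :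
    ∃ S : List V, S ≠ [] ∧ R = u₁ ++ S ++ u₄ ∧ S.headI = w ∧ S.getLastI = z ∧
      u₁.length + (S.length - 1) = u₃.length := by
  have heq : u₁ ++ w :: u₂ = u₃ ++ z :: u₄ := h1.symm.trans h2
  have hpre : u₁ = u₃.take u₁.length := by
    have := congrArg (List.take u₁.length) heq
    rw [List.take_append, List.take_append,
      List.take_of_length_le le_rfl] at this
    have e1 : u₁.length - u₁.length = 0 := by omega
    have e2 : u₁.length - u₃.length = 0 := by omega
    rw [e1, e2] at this
    simpa using this
  obtain ⟨r, hr⟩ : ∃ r, u₃ = u₁ ++ r := ⟨u₃.drop u₁.length, by rw [hpre, ← List.take_append_drop u₁.length u₃, hpre]; simp⟩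
  subst hr
  have hcan : w :: u₂ = r ++ z :: u₄ := by
    rw [List.append_assoc] at heq
    exact List.append_cancel_left heq
  cases r with
  | nil =>
    simp only [List.nil_append, List.cons.injEq] at hcan
    obtain ⟨rfl, rfl⟩ := hcan
    exact ⟨[w], by simp, by simpa using h1, rfl, rfl, by simp⟩
  | cons r₀ r' =>
    have hw : r₀ = w := by
      have := congrArg List.headI hcan
      simpa using this.symm
    subst hw
    refine ⟨(r₀ :: r') ++ [z], by simp, ?_, ?_, ?_, ?_⟩
    · rw [h2]; simp
    · simp
    · exact getLastI_concat' _ _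
    · simp

/-- Lower bound version: distance between points at two positions bounds
the difference of prefix lengths. -/
lemma pPre_point_ge [Inhabited V]
    (hlow : ∀ p : List V, p ≠ [] → d p.headI p.getLastI ≤ pLen c p)
    (R u₁ u₂ u₃ u₄ : List V) (w z : V)
    (h1 : R = u₁ ++ w :: u₂) (h2 : R = u₃ ++ z :: u₄) (hle : u₁.length ≤ u₃.length) :
    pPre c R u₁.length + d w z ≤ pPre c R u₃.length := by
  obtain ⟨S, hS, hRd, hh, hl, hlen⟩ := seg_exists R u₁ u₂ u₃ u₄ w z h1 h2 hle
  have hF := pPre_eq (c := c) u₁ S u₄ R hS hRd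
  rw [hlen] at hF
  have hd := hlow S hS
  rw [hh, hl] at hd
  linarith

end
/-- If the via path `P = P_svt` is `T`-locally optimal with
`T = α·l(P)`, verified on the section `P_xvy` around `v` with
`d(x,v) ≥ T` and `d(v,y) ≥ T`, then every via path `P'` via `v` containing
`P_xvy` with `l(P') ≤ (1/γ)·l(P)` (for `γ ∈ (0,1]`) is `(α·γ)`-relative
locally optimal. -/
theorem stmt9 [Inhabited V] (c d : V → V → ℝ) (hc : ∀ a b, 0 ≤ c a b)
    (hlow : ∀ p : List V, p ≠ [] → d p.headI p.getLastI ≤ pLen c p)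
    (htri : ∀ a b e : V, d a e ≤ d a b + d b e)
    (α γ : ℝ) (hα0 : 0 < α) (hα1 : α ≤ 1) (hγ0 : 0 < γ) (hγ1 : γ ≤ 1)
    (s t s' t' v x y : V)
    -- `P` is the single-via path via `v` for `(s,t)`
    (p1 p2 P : List V)
    (hp1 : IsShortestPath c d p1) (hp1h : p1.headI = s) (hp1l : p1.getLastI = v)
    (hp2 : IsShortestPath c d p2) (hp2h : p2.headI = v) (hp2l : p2.getLastI = t)
    (hP : P = p1 ++ p2.tail)
    -- `P` is verified T-locally optimal with `T = α·l(P)`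
    (hTLO : TLocOpt c d (α * pLen c P) P)
    -- `Q = P_xvy` is the verified section around `v`, with endpoints far from `v`
    (Q : List V) (hQne : Q ≠ []) (hQP : Q <:+: P)
    (hQx : Q.headI = x) (hQy : Q.getLastI = y) (hvQ : v ∈ Q)
    (hdx : α * pLen c P ≤ d x v) (hdy : α * pLen c P ≤ d v y)
    -- `P'` is the single-via path via `v` for `(s',t')` containing `Q`
    (q1 q2 P' : List V)
    (hq1 : IsShortestPath c d q1) (hq1h : q1.headI = s') (hq1l : q1.getLastI = v)
    (hq2 : IsShortestPath c d q2) (hq2h : q2.headI = v) (hq2l : q2.getLastI = t')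
    (hP' : P' = q1 ++ q2.tail)
    (hQP' : Q <:+: P')
    -- length constraint
    (hlen : pLen c P' ≤ (1 / γ) * pLen c P) :
    TLocOpt c d (α * γ * pLen c P') P' := by
  intro q hqne hqinf hqint
  have hT'leT : α * γ * pLen c P' ≤ α * pLen c P := by
    have h2 := mul_le_mul_of_nonneg_left hlen hγ0.le
    have h3 : γ * (1 / γ * pLen c P) = pLen c P := by field_simp
    have h1 : γ * pLen c P' ≤ pLen c P := by rw [h3] at h2; exact h2
    calc α * γ * pLen c P' = α * (γ * pLen c P') := by ring
      _ ≤ α * pLen c P := mul_le_mul_of_nonneg_left h1 hα0.le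
  have hqint' : pLen c (pInterior q) < α * pLen c P := lt_of_lt_of_le hqint hT'leT
  have hq1ne := hq1.1
  have hq2ne := hq2.1
  have hq2cons : q2 = v :: q2.tail := by
    conv_lhs => rw [← cons_headI_tail' q2 hq2ne]
    rw [hq2h]
  have hq1split : q1 = q1.dropLast ++ [v] := by
    conv_lhs => rw [← concat_getLastI q1 hq1ne]
    rw [hq1l]
  have hP'2 : P' = q1.dropLast ++ q2 := by
    rw [hP']
    conv_lhs => rw [hq1split]
    rw [List.append_assoc, List.singleton_append, ← hq2cons]
  have hq1len : 1 ≤ q1.length := List.length_pos_iff.mpr hq1ne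
  obtain ⟨l₁, l₂, hdec⟩ := hqinf
  by_cases hA : l₁.length + q.length ≤ q1.length
  · -- q is an infix of q1
    have h1 : P'.take q1.length = q1 := by rw [hP', List.take_left]
    have h2 : P'.take q1.length
        = (l₁ ++ q) ++ l₂.take (q1.length - (l₁.length + q.length)) := by
      conv_lhs => rw [← hdec]
      rw [List.take_append,
        List.take_of_length_le (by rw [List.length_append]; omega), List.length_append]
    exact shortest_infix hc hlow htri hqne
      ⟨l₁, l₂.take (q1.length - (l₁.length + q.length)),
        by rw [← h2]; exact h1⟩ hq1
  by_cases hB : q1.length - 1 ≤ l₁.length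
  · -- q is an infix of q2
    have h1 : P'.drop (q1.length - 1) = q2 := by
      rw [hP'2, List.drop_append, List.length_dropLast,
        List.drop_eq_nil_of_le (by rw [List.length_dropLast])]
      have e : q1.length - 1 - (q1.length - 1) = 0 := by omega
      rw [e, List.drop_zero, List.nil_append]
    have h2 : P'.drop (q1.length - 1) = l₁.drop (q1.length - 1) ++ (q ++ l₂) := by
      conv_lhs => rw [← hdec]
      rw [List.append_assoc, List.drop_append]
      have e : q1.length - 1 - l₁.length = 0 := by omega
      rw [e, List.drop_zero]
    exact shortest_infix hc hlow htri hqne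
      ⟨l₁.drop (q1.length - 1), l₂, by rw [List.append_assoc, ← h2]; exact h1⟩ hq2
  -- Case C : q straddles the junction vertex v
  push_neg at hA hB
  -- abbreviations
  have hkdef : l₁.length + 1 ≤ q1.length - 1 := by omega
  have hABq : q.take (q1.length - 1 - l₁.length) ++ q.drop (q1.length - 1 - l₁.length) = q :=
    List.take_append_drop _ q
  set k := q1.length - 1 - l₁.length with hk
  set A := q.take k with hAdef
  set B := q.drop k with hBdef
  have hk1 : 1 ≤ k := by omega
  have hkm : k + 2 ≤ q.length := by omega
  have hA_len : A.length = k := by rw [hAdef, List.length_take]; omega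
  have hB_len : B.length = q.length - k := by rw [hBdef, List.length_drop]
  have hAne : A ≠ [] := by rw [← List.length_pos_iff]; omega
  have hBne : B ≠ [] := by rw [← List.length_pos_iff]; omega
  have hkey : l₁ ++ A = q1.dropLast ∧ B ++ l₂ = q2 := by
    apply List.append_inj
    · rw [List.append_assoc, ← List.append_assoc A B, hABq, ← List.append_assoc, hdec, hP'2]
    · rw [List.length_append, hA_len, List.length_dropLast]; omega
  obtain ⟨hkey1, hkey2⟩ := hkey
  have hBh : B.headI = v := by
    have h := headI_append' B l₂ hBne
    rw [hkey2] at h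
    rw [← h]; exact hq2h
  have hBcons : B = v :: B.tail := by
    conv_lhs => rw [← cons_headI_tail' B hBne]
    rw [hBh]
  have hAh : A.headI = q.headI := by
    have h := headI_append' A B hAne
    rw [hABq] at h
    exact h.symm
  have hAcons : A = q.headI :: A.tail := by
    conv_lhs => rw [← cons_headI_tail' A hAne]
    rw [hAh]
  have hBl : B.getLastI = q.getLastI := by
    have h := getLastI_append' A B hBne
    rw [hABq] at h
    exact h.symm
  -- interior of q splits at v
  have hBtne : B.tail ≠ [] := by
    rw [← List.length_pos_iff, List.length_tail]; omega
  have hBdl : B.dropLast = v :: B.tail.dropLast := by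
    conv_lhs => rw [hBcons]
    exact List.dropLast_cons_of_ne_nil hBtne
  have hBdlne : B.dropLast ≠ [] := by rw [hBdl]; simp
  have hdrop1 : q.drop 1 = A.tail ++ B := by
    conv_lhs => rw [← hABq]
    conv_lhs => rw [hAcons]
    simp
  have hint_eq : pInterior q = A.tail ++ B.dropLast := by
    unfold pInterior
    rw [hdrop1]
    conv_lhs => rw [show B = B.dropLast ++ [B.getLastI] from (concat_getLastI B hBne).symm]
    rw [← List.append_assoc, List.dropLast_concat]
  have hint_split : pLen c (pInterior q)
      = pLen c (A.tail ++ [v]) + pLen c B.dropLast := by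
    rw [hint_eq, hBdl, pLen_join A.tail v B.tail.dropLast, ← hBdl]
  have h5 : pLen c (A.tail ++ [v]) < α * pLen c P := by
    have := pLen_nonneg hc B.dropLast
    linarith [hqint', hint_split]
  have h6 : pLen c B.dropLast < α * pLen c P := by
    have := pLen_nonneg hc (A.tail ++ [v])
    linarith [hqint', hint_split]
  -- decompositions of P' around the marked vertices x, v, y
  obtain ⟨g₁, g₂, hgdec⟩ := hQP'
  obtain ⟨Qa, Qb, hQsplit⟩ := List.append_of_mem hvQ
  have hQcons : Q = x :: Q.tail := by
    conv_lhs => rw [← cons_headI_tail' Q hQne]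
    rw [hQx]
  have hQconcat : Q = Q.dropLast ++ [y] := by
    conv_lhs => rw [← concat_getLastI Q hQne]
    rw [hQy]
  have hQlen : Q.length = Qa.length + Qb.length + 1 := by
    rw [hQsplit]; simp; omega
  have hdx' : P' = g₁ ++ x :: (Q.tail ++ g₂) := by
    rw [← hgdec]
    conv_lhs => rw [hQcons]
    simp
  have hdv' : P' = (g₁ ++ Qa) ++ v :: (Qb ++ g₂) := by
    rw [← hgdec, hQsplit]
    simp
  have hdy' : P' = (g₁ ++ Q.dropLast) ++ y :: g₂ := by
    rw [← hgdec]
    conv_lhs => rw [hQconcat]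
    simp
  have hdπ' : P' = q1.dropLast ++ v :: q2.tail := by
    rw [hP'2]
    conv_lhs => rw [hq2cons]
  -- prefix-length inequalities
  have hFa : pPre c P' g₁.length + d x v ≤ pPre c P' (g₁ ++ Qa).length :=
    pPre_point_ge hlow P' g₁ _ (g₁ ++ Qa) _ x v hdx' hdv' (by simp)
  have hFb : pPre c P' (g₁ ++ Qa).length + d v y ≤ pPre c P' (g₁ ++ Q.dropLast).length :=
    pPre_point_ge hlow P' (g₁ ++ Qa) _ (g₁ ++ Q.dropLast) _ v y hdv' hdy'
      (by simp [List.length_dropLast]; omega)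
  have hdvv : d v v ≤ 0 := by
    have h := hlow [v] (by simp)
    simpa [pLen, List.getLastI] using h
  have hFj0π : pPre c P' (g₁ ++ Qa).length = pPre c P' q1.dropLast.length := by
    rcases le_total (g₁ ++ Qa).length q1.dropLast.length with hle | hle
    · refine le_antisymm (pPre_mono hc P' hle) ?_
      obtain ⟨S, hS, hRd, hh, hl, hlen'⟩ :=
        seg_exists P' (g₁ ++ Qa) _ q1.dropLast q2.tail v v hdv' hdπ' hle
      have hSq1 : (g₁ ++ Qa) ++ S = q1 := by
        have h4 : ((g₁ ++ Qa) ++ S) ++ q2.tail = q1 ++ q2.tail := by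
          rw [← hRd, ← hP']
        exact List.append_cancel_right h4
      have hSshort := shortest_infix hc hlow htri hS
        ⟨g₁ ++ Qa, [], by rw [List.append_nil]; exact hSq1⟩ hq1
      have hplS : pLen c S ≤ 0 := by rw [hSshort.2, hh, hl]; exact hdvv
      have hF := pPre_eq (c := c) (g₁ ++ Qa) S q2.tail P' hS hRd
      rw [hlen'] at hF
      linarith
    · refine le_antisymm ?_ (pPre_mono hc P' hle)
      obtain ⟨S, hS, hRd, hh, hl, hlen'⟩ :=
        seg_exists P' q1.dropLast (v :: q2.tail).tail (g₁ ++ Qa) (Qb ++ g₂) v v hdπ' hdv' hle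
      have hSq2 : S ++ (Qb ++ g₂) = q2 := by
        have h4 : q1.dropLast ++ (S ++ (Qb ++ g₂)) = q1.dropLast ++ q2 := by
          rw [← List.append_assoc, ← hRd, ← hP'2]
        exact List.append_cancel_left h4
      have hSshort := shortest_infix hc hlow htri hS
        ⟨[], Qb ++ g₂, by rw [List.nil_append]; exact hSq2⟩ hq2
      have hplS : pLen c S ≤ 0 := by rw [hSshort.2, hh, hl]; exact hdvv
      have hF := pPre_eq (c := c) q1.dropLast S (Qb ++ g₂) P' hS hRd
      rw [hlen'] at hF
      linarith
  -- prefix-length identities for the two halves of the interior of q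
  have hAtl : A.tail.length = k - 1 := by rw [List.length_tail]; omega
  have hFi1 : pPre c P' q1.dropLast.length
      = pPre c P' (l₁ ++ [q.headI]).length + pLen c (A.tail ++ [v]) := by
    have hdecp : P' = (l₁ ++ [q.headI]) ++ (A.tail ++ [v]) ++ (B.tail ++ l₂) := by
      rw [← hdec]
      conv_lhs => rw [← hABq]
      conv_lhs => rw [hAcons, hBcons]
      simp
    have hF := pPre_eq (c := c) (l₁ ++ [q.headI]) (A.tail ++ [v]) (B.tail ++ l₂) P'
      (by simp) hdecp
    have e : (l₁ ++ [q.headI]).length + ((A.tail ++ [v]).length - 1)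
        = q1.dropLast.length := by
      rw [← hkey1]
      simp [List.length_append, hAtl, hA_len]
      omega
    rw [e] at hF
    exact hF
  have hFβ : pPre c P' (q1.dropLast.length + (B.dropLast.length - 1))
      = pPre c P' q1.dropLast.length + pLen c B.dropLast := by
    have hdecp : P' = (l₁ ++ A) ++ B.dropLast ++ (q.getLastI :: l₂) := by
      rw [← hdec]
      conv_lhs => rw [← hABq]
      conv_lhs => rw [show B = B.dropLast ++ [B.getLastI] from (concat_getLastI B hBne).symm]
      rw [hBl]
      simp
    have hF := pPre_eq (c := c) (l₁ ++ A) B.dropLast (q.getLastI :: l₂) P' hBdlne hdecp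
    rw [hkey1] at hF
    exact hF
  -- the two containment inequalities
  have hBdllen : B.dropLast.length = q.length - k - 1 := by
    rw [List.length_dropLast]; omega
  have hQdllen : (g₁ ++ Q.dropLast).length = g₁.length + (Q.length - 1) := by
    rw [List.length_append, List.length_dropLast]
  have ha_le : g₁.length ≤ l₁.length := by
    by_contra hcon
    push_neg at hcon
    have h1 : pPre c P' (l₁ ++ [q.headI]).length ≤ pPre c P' g₁.length :=
      pPre_mono hc P' (by simp; omega)
    linarith [hFa, hFj0π, hFi1, hdx, h1, h5]
  have hb_ge : l₁.length + q.length ≤ g₁.length + Q.length := by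
    by_contra hcon
    push_neg at hcon
    have h1 : pPre c P' (g₁ ++ Q.dropLast).length
        ≤ pPre c P' (q1.dropLast.length + (B.dropLast.length - 1)) := by
      apply pPre_mono hc P'
      rw [hQdllen, List.length_dropLast]
      omega
    linarith [hFb, hFj0π, hFβ, hdy, h1, h6]
  -- q is an infix of Q, hence of P
  have hsub : q <:+: Q := by
    have hg₁pre : l₁ = g₁ ++ l₁.drop g₁.length := by
      have h1 : g₁ = l₁.take g₁.length := by
        have h2 : P'.take g₁.length = g₁ := by
          rw [← hgdec, List.append_assoc, List.take_append,
            List.take_of_length_le le_rfl]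
          have e : g₁.length - g₁.length = 0 := by omega
          rw [e]; simp
        have h3 : P'.take g₁.length = l₁.take g₁.length := by
          rw [← hdec, List.append_assoc, List.take_append]
          have e : g₁.length - l₁.length = 0 := by omega
          rw [e]; simp
        exact h2.symm.trans h3
      conv_lhs => rw [← List.take_append_drop g₁.length l₁, ← h1]
    have hcan : (l₁.drop g₁.length ++ q) ++ l₂ = Q ++ g₂ := by
      have h4 : g₁ ++ ((l₁.drop g₁.length ++ q) ++ l₂) = g₁ ++ (Q ++ g₂) := by
        calc g₁ ++ ((l₁.drop g₁.length ++ q) ++ l₂)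
            = (g₁ ++ l₁.drop g₁.length) ++ q ++ l₂ := by simp [List.append_assoc]
          _ = l₁ ++ q ++ l₂ := by rw [← hg₁pre]
          _ = P' := hdec
          _ = g₁ ++ (Q ++ g₂) := by rw [← hgdec]; simp [List.append_assoc]
      exact List.append_cancel_left h4
    have hlen2 : (l₁.drop g₁.length ++ q).length ≤ Q.length := by
      rw [List.length_append, List.length_drop]
      omega
    have hQeq : Q = (l₁.drop g₁.length ++ q)
        ++ l₂.take (Q.length - (l₁.drop g₁.length ++ q).length) := by
      have h1 : (Q ++ g₂).take Q.length = Q := List.take_left (l₁ := Q) (l₂ := g₂)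
      rw [← hcan, List.take_append, List.take_of_length_le hlen2] at h1
      exact h1.symm
    exact ⟨l₁.drop g₁.length, l₂.take (Q.length - (l₁.drop g₁.length ++ q).length),
      hQeq.symm⟩
  exact hTLO q hqne (hsub.trans hQP) hqint'
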